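/- Let t ≥ 2 and B ≥ 0 be integers. Then for every integer j with (4B+1)·2^t + 1 ≤ j ≤ (4B+3)·2^t, one has ν₂( C( (8B+2)·2^t + 1 , j ) ) ≥ α(B). -/

import Mathlib

lemma alpha_split (k a b : ℕ) (ha : a < 2 ^ k) :
    (Nat.digits 2 (b * 2 ^ k + a)).sum = (Nat.digits 2 b).sum + (Nat.digits 2 a).sum := by
  rcases Nat.eq_zero_or_pos b with rfl | hb
  · simp
  have hlen : (Nat.digits 2 a).length ≤ k := by
    rcases Nat.eq_zero_or_pos a with rfl | hapos
    · simp
    rw [Nat.digits_len 2 a (by norm_num) hapos.ne']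
    have := (Nat.log_lt_iff_lt_pow (by norm_num) hapos.ne').mpr ha
    omega
  have h := Nat.digits_append_zeroes_append_digits (b := 2) (k := k - (Nat.digits 2 a).length)
    (m := b) (n := a) (by norm_num) hb
  rw [Nat.add_sub_cancel' hlen] at h
  have h2 : (Nat.digits 2 (a + 2 ^ k * b)).sum
      = (Nat.digits 2 b).sum + (Nat.digits 2 a).sum := by
    rw [← h]; simp [List.sum_append]; ring
  rw [show b * 2 ^ k + a = a + 2 ^ k * b by ring, h2]

lemma one_le_alpha : ∀ a : ℕ, a ≠ 0 → 1 ≤ (Nat.digits 2 a).sum := by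
  intro a ha
  induction a using Nat.strong_induction_on with
  | _ a ih =>
    rcases Nat.even_or_odd a with ⟨m, hm⟩ | ⟨m, hm⟩
    · have h := alpha_split 1 0 m (by norm_num)
      have : a = m * 2 ^ 1 + 0 := by omega
      rw [this, h]
      simpa using ih m (by omega) (by omega)
    · have h := alpha_split 1 1 m (by norm_num)
      have : a = m * 2 ^ 1 + 1 := by omega
      rw [this, h]
      simp

lemma alpha_pred : ∀ a : ℕ, (Nat.digits 2 (a + 1)).sum ≤ (Nat.digits 2 a).sum + 1 := by
  intro a
  induction a using Nat.strong_induction_on with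
  | _ a ih =>
    rcases Nat.even_or_odd a with ⟨m, hm⟩ | ⟨m, hm⟩
    · have h0 : a = m * 2 ^ 1 + 0 := by omega
      have h1 : a + 1 = m * 2 ^ 1 + 1 := by omega
      rw [h1, h0, alpha_split 1 0 m (by norm_num), alpha_split 1 1 m (by norm_num)]
      simp
    · have h0 : a = m * 2 ^ 1 + 1 := by omega
      have h1 : a + 1 = (m + 1) * 2 ^ 1 + 0 := by omega
      rw [h1, h0, alpha_split 1 0 (m + 1) (by norm_num), alpha_split 1 1 m (by norm_num)]
      have := ih m (by omega)
      simp at *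
      omega

/-- Lemma 2.3: for `t ≥ 2`, `B ≥ 0`, and `(4B+1)·2^t + 1 ≤ j ≤ (4B+3)·2^t`,
the 2-adic valuation of `C((8B+2)·2^t + 1, j)` is at least `α(B)`. -/
theorem stmt0 (t B : ℕ) (ht : 2 ≤ t) (j : ℕ)
    (hj1 : (4 * B + 1) * 2 ^ t + 1 ≤ j) (hj2 : j ≤ (4 * B + 3) * 2 ^ t) :
    (Nat.digits 2 B).sum ≤ padicValNat 2 (Nat.choose ((8 * B + 2) * 2 ^ t + 1) j) := by
  by_cases hB : B = 0
  · subst hB; simp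
  haveI : Fact (Nat.Prime 2) := ⟨Nat.prime_two⟩
  have hBpos : 1 ≤ B := Nat.one_le_iff_ne_zero.mpr hB
  have hP4 : 4 ≤ 2 ^ t := by
    calc (4 : ℕ) = 2 ^ 2 := by norm_num
    _ ≤ 2 ^ t := Nat.pow_le_pow_right (by norm_num) ht
  set P := 2 ^ t with hP
  have e1 : 2 ^ (t + 1) = 2 * P := by rw [pow_succ]; ring
  have e2 : 2 ^ (t + 2) = 4 * P := by rw [pow_add]; ring
  have e3 : 2 ^ (t + 3) = 8 * P := by rw [pow_add]; ring
  have q1 : (4 * B + 1) * P = 4 * (B * P) + P := by ring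
  have q2 : (4 * B + 3) * P = 4 * (B * P) + 3 * P := by ring
  have q3 : (8 * B + 2) * P = 8 * (B * P) + 2 * P := by ring
  have q4 : B * 2 ^ (t + 2) = 4 * (B * P) := by rw [e2]; ring
  have q5 : B * 2 ^ (t + 3) = 8 * (B * P) := by rw [e3]; ring
  have q6 : B * (4 * P) = 4 * (B * P) := by ring
  have q7 : (B - 1) * 2 ^ (t + 2) = 4 * (B * P) - 4 * P := by
    rw [Nat.sub_one_mul, e2, show B * (4 * P) = 4 * (B * P) by ring]
  have q8 : (4 * B + 2) * P = 4 * (B * P) + 2 * P := by ring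
  have q9 : P ≤ B * P := Nat.le_mul_of_pos_left P hBpos
  set n := (8 * B + 2) * P + 1 with hn
  have hjn : j ≤ n := by
    have := Nat.mul_le_mul_right P (show 4 * B + 3 ≤ 8 * B + 2 by omega)
    omega
  have key := sub_one_mul_padicValNat_choose_eq_sub_sum_digits (p := 2) hjn
  rw [show (2 : ℕ) - 1 = 1 by norm_num, one_mul] at key
  have ha1 : (Nat.digits 2 1).sum = 1 := by norm_num
  have ha0 : (Nat.digits 2 0).sum = 0 := by simp
  -- α n = α B + 2
  have hnsplit : n = B * 2 ^ (t + 3) + (2 ^ (t + 1) + 1) := by omega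
  have han : (Nat.digits 2 n).sum = (Nat.digits 2 B).sum + 2 := by
    rw [hnsplit, alpha_split (t + 3) _ B (by omega)]
    have h21 : (2 : ℕ) ^ (t + 1) + 1 = 1 * 2 ^ (t + 1) + 1 := by ring
    rw [h21, alpha_split (t + 1) 1 1 (by omega), ha1]
  rcases le_or_gt j ((4 * B + 2) * P) with hA | hBig
  · -- Case A
    set a := j - B * (4 * P) with hadef
    have hja : j = B * 2 ^ (t + 2) + a := by omega
    have haub : a ≤ 2 * P := by omega
    have halb : P + 1 ≤ a := by omega
    have haj : (Nat.digits 2 j).sum = (Nat.digits 2 B).sum + (Nat.digits 2 a).sum := by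
      rw [hja]; exact alpha_split (t + 2) a B (by omega)
    have hm : n - j = B * 2 ^ (t + 2) + (2 * P + 1 - a) := by omega
    have ham : (Nat.digits 2 (n - j)).sum
        = (Nat.digits 2 B).sum + (Nat.digits 2 (2 * P + 1 - a)).sum := by
      rw [hm]; exact alpha_split (t + 2) _ B (by omega)
    have h1 := one_le_alpha a (by omega)
    have h2 := one_le_alpha (2 * P + 1 - a) (by omega)
    omega
  · -- Case B
    set a := j - (B * (4 * P) + 2 * P) with hadef
    have halb : 1 ≤ a := by omega
    have haub : a ≤ P := by omega
    have hja : j = B * 2 ^ (t + 2) + (2 * P + a) := by omega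
    have haj : (Nat.digits 2 j).sum
        = (Nat.digits 2 B).sum + 1 + (Nat.digits 2 a).sum := by
      rw [hja, alpha_split (t + 2) _ B (by omega),
        show 2 * P + a = 1 * 2 ^ (t + 1) + a by omega,
        alpha_split (t + 1) a 1 (by omega), ha1]
      omega
    have h1 := one_le_alpha a (by omega)
    rcases eq_or_lt_of_le halb with h1a | h2a
    · -- a = 1
      have hm : n - j = B * 2 ^ (t + 2) + 0 := by omega
      have ham : (Nat.digits 2 (n - j)).sum = (Nat.digits 2 B).sum := by
        rw [hm, alpha_split (t + 2) 0 B (by omega), ha0]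
        omega
      omega
    · -- a ≥ 2
      have hm : n - j = (B - 1) * 2 ^ (t + 2) + (4 * P - (a - 1)) := by
        have : (B - 1) * (4 * P) = B * (4 * P) - 4 * P :=
          Nat.sub_one_mul B (4 * P)
        omega
      have hlt : 4 * P - (a - 1) < 2 ^ (t + 2) := by omega
      have ham : (Nat.digits 2 (n - j)).sum
          = (Nat.digits 2 (B - 1)).sum + (Nat.digits 2 (4 * P - (a - 1))).sum := by
        rw [hm]; exact alpha_split (t + 2) _ (B - 1) hlt
      have h2 := one_le_alpha (4 * P - (a - 1)) (by omega)
      have h3 := alpha_pred (B - 1)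
      rw [show B - 1 + 1 = B by omega] at h3
      omega
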